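/- Let k_d ≥ 1 and k ≥ 1 be integers. The matrix D_3 with entries D_3(s,t) = binomial(k_d + s - 1, k_d + s - t) for 1 ≤ s, t ≤ k_d has determinant 1. Equivalently, D_3 can be reduced by elementary row operations to an upper triangular matrix with all diagonal entries equal to 1. -/
import Mathlib


open Matrix Finset

lemma vandermonde_range (s kd t : ℕ) :
    ∑ r ∈ Finset.range (t + 1), s.choose r * kd.choose (t - r) = (s + kd).choose t := by
  rw [Nat.add_choose_eq, Finset.Nat.sum_antidiagonal_eq_sum_range_succ_mk]

/-- The matrix `D₃` with entries `D₃(s,t) = C(k_d + s - 1, k_d + s - t)` for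
`1 ≤ s,t ≤ k_d` (here 0-based: `D₃(s,t) = C(k_d + s, k_d + s - t)` for `s,t : Fin k_d`)
has determinant `1`. -/
theorem matD3_det_eq_one (k kd : ℕ) (hkd : 1 ≤ kd) (hk : 1 ≤ k) :
    (Matrix.of fun s t : Fin kd =>
      ((Nat.choose (kd + s.val) (kd + s.val - t.val) : ℕ) : ℚ)).det = 1 := by
  set A : Matrix (Fin kd) (Fin kd) ℚ :=
    Matrix.of fun s r : Fin kd => ((Nat.choose s.val r.val : ℕ) : ℚ) with hA
  set B : Matrix (Fin kd) (Fin kd) ℚ :=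
    Matrix.of fun r t : Fin kd =>
      if r.val ≤ t.val then ((Nat.choose kd (t.val - r.val) : ℕ) : ℚ) else 0 with hB
  have hfac : (Matrix.of fun s t : Fin kd =>
      ((Nat.choose (kd + s.val) (kd + s.val - t.val) : ℕ) : ℚ)) = A * B := by
    ext s t
    have ht : t.val ≤ kd + s.val := le_trans (le_of_lt t.isLt) (Nat.le_add_right _ _)
    have hsymm : Nat.choose (kd + s.val) (kd + s.val - t.val)
        = Nat.choose (kd + s.val) t.val := by
      exact Nat.choose_symm ht
    simp only [Matrix.mul_apply, Matrix.of_apply, hA, hB]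
    rw [hsymm]
    have : ∑ r : Fin kd, ((Nat.choose s.val r.val : ℕ) : ℚ) *
        (if r.val ≤ t.val then ((Nat.choose kd (t.val - r.val) : ℕ) : ℚ) else 0)
        = ∑ r ∈ Finset.range kd, (if r ≤ t.val then
            ((Nat.choose s.val r * Nat.choose kd (t.val - r) : ℕ) : ℚ) else 0) := by
      rw [Fin.sum_univ_eq_sum_range
        (fun r => ((Nat.choose s.val r : ℕ) : ℚ) *
          (if r ≤ t.val then ((Nat.choose kd (t.val - r) : ℕ) : ℚ) else 0))]
      refine Finset.sum_congr rfl fun r _ => ?_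
      split_ifs <;> push_cast <;> ring
    rw [this]
    have hsub : Finset.range (t.val + 1) ⊆ Finset.range kd := by
      intro x hx
      simp only [Finset.mem_range] at *
      omega
    rw [← Finset.sum_subset hsub (fun x _ hx => by
      simp only [Finset.mem_range, not_lt] at hx
      rw [if_neg (by omega)])]
    rw [Finset.sum_congr rfl (fun x hx => by
      simp only [Finset.mem_range] at hx
      rw [if_pos (by omega)])]
    rw [← Nat.cast_sum]
    rw [vandermonde_range s.val kd t.val]
    rw [Nat.add_comm]
  rw [hfac, Matrix.det_mul]
  have hdetA : A.det = 1 := by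
    have : A.det = ∏ i : Fin kd, A i i := by
      apply Matrix.det_of_lowerTriangular
      intro i j hij
      simp only [hA, Matrix.of_apply]
      rw [Nat.choose_eq_zero_of_lt (by exact hij), Nat.cast_zero]
    rw [this]
    simp [hA]
  have hdetB : B.det = 1 := by
    have : B.det = ∏ i : Fin kd, B i i := by
      apply Matrix.det_of_upperTriangular
      intro i j hij
      simp only [hB, Matrix.of_apply]
      rw [if_neg (by exact Nat.not_le.mpr hij)]
    rw [this]
    simp [hB]
  rw [hdetA, hdetB, mul_one]
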